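/- Let A, B, C be three non-collinear points of the Euclidean plane and let A' be a point of the segment [B, C] such that ∠BAA' = ∠CAA' (i.e. A' is the foot of the internal bisector of the angle at A). Then |AB| + |AC| ≥ (√(|AC|/|AB|) + √(|AB|/|AC|))·|AA'|. -/
import Mathlib


open EuclideanGeometry RealInnerProductSpace

theorem statement10 (A B C A' : EuclideanSpace ℝ (Fin 2))
    (h : ¬ Collinear ℝ ({A, B, C} : Set (EuclideanSpace ℝ (Fin 2))))
    (hA' : A' ∈ segment ℝ B C)
    (hbis : ∠ B A A' = ∠ C A A') :
    dist A B + dist A C ≥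
      (Real.sqrt (dist A C / dist A B) + Real.sqrt (dist A B / dist A C)) * dist A A' := by
  by_cases hw0 : A' = A
  · subst hw0
    simp only [dist_self, mul_zero, ge_iff_le]
    positivity
  have hAB : A ≠ B := by
    rintro rfl
    apply h
    have : ({A, A, C} : Set (EuclideanSpace ℝ (Fin 2))) = {A, C} := by simp
    rw [this]; exact collinear_pair ℝ A C
  have hAC : A ≠ C := by
    rintro rfl
    apply h
    have : ({A, B, A} : Set (EuclideanSpace ℝ (Fin 2))) = {A, B} := by
      simp [Set.insert_comm, Set.pair_comm]
    rw [this]; exact collinear_pair ℝ A B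
  set u : EuclideanSpace ℝ (Fin 2) := B - A with hu_def
  set v : EuclideanSpace ℝ (Fin 2) := C - A with hv_def
  set w : EuclideanSpace ℝ (Fin 2) := A' - A with hw_def
  have hu : u ≠ 0 := sub_ne_zero_of_ne (Ne.symm hAB)
  have hv : v ≠ 0 := sub_ne_zero_of_ne (Ne.symm hAC)
  have hw : w ≠ 0 := sub_ne_zero_of_ne hw0
  set b := ‖u‖ with hb_def
  set c := ‖v‖ with hc_def
  set t := ‖w‖ with ht_def
  have hb : 0 < b := norm_pos_iff.2 hu
  have hc : 0 < c := norm_pos_iff.2 hv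
  have htpos : 0 < t := norm_pos_iff.2 hw
  set m := ⟪u, v⟫ with hm_def
  have hm_le : m ≤ b * c := real_inner_le_norm u v
  have hm_ne : m ≠ b * c := by
    intro heq
    apply h
    have hsm : c • u = b • v := inner_eq_norm_mul_iff_real.1 heq
    rw [collinear_iff_of_mem (show A ∈ ({A, B, C} : Set (EuclideanSpace ℝ (Fin 2))) by simp)]
    refine ⟨u, fun p hp => ?_⟩
    rcases hp with rfl | rfl | rfl
    · exact ⟨0, by simp⟩
    · exact ⟨1, by simp [hu_def]⟩
    · refine ⟨c / b, ?_⟩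
      have hcb : (c / b) • u = v := by
        rw [div_eq_inv_mul, ← smul_smul, hsm, smul_smul, inv_mul_cancel₀ hb.ne', one_smul]
      simp [hcb, hv_def]
  -- segment decomposition
  obtain ⟨s1, s2, hs1, hs2, hsum, hcomb⟩ := hA'
  have hwv : w = s1 • u + s2 • v := by
    rw [hw_def, hu_def, hv_def, ← hcomb, smul_sub, smul_sub]
    have : s1 • B - s1 • A + (s2 • C - s2 • A) = s1 • B + s2 • C - (s1 + s2) • A := by
      rw [add_smul]; abel
    rw [this, hsum, one_smul]
  -- inner products
  have hiuw : ⟪u, w⟫ = s1 * b ^ 2 + s2 * m := by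
    rw [hwv, inner_add_right, real_inner_smul_right, real_inner_smul_right,
      real_inner_self_eq_norm_sq, hm_def]
  have hivw : ⟪v, w⟫ = s1 * m + s2 * c ^ 2 := by
    rw [hwv, inner_add_right, real_inner_smul_right, real_inner_smul_right,
      real_inner_self_eq_norm_sq, hm_def, real_inner_comm]
  -- equal cosines
  have hcos : ⟪u, w⟫ / (b * t) = ⟪v, w⟫ / (c * t) := by
    have h1 : Real.cos (∠ B A A') = Real.cos (∠ C A A') := by rw [hbis]
    rw [EuclideanGeometry.angle, EuclideanGeometry.angle,
      InnerProductGeometry.cos_angle, InnerProductGeometry.cos_angle] at h1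
    simpa [vsub_eq_sub, ← hu_def, ← hv_def, ← hw_def] using h1
  have hcos2 : ⟪u, w⟫ * c = ⟪v, w⟫ * b := by
    rw [div_eq_div_iff (by positivity) (by positivity)] at hcos
    apply mul_right_cancel₀ htpos.ne'
    rw [mul_assoc, mul_assoc]; exact hcos
  rw [hiuw, hivw] at hcos2
  have hw2 : t ^ 2 = s1 * (s1 * b ^ 2 + s2 * m) + s2 * (s1 * m + s2 * c ^ 2) := by
    rw [ht_def, ← real_inner_self_eq_norm_sq]
    nth_rewrite 1 [hwv]
    rw [inner_add_left, real_inner_smul_left, real_inner_smul_left, hiuw, hivw]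
  have hdb : dist A B = b := by rw [dist_eq_norm, hb_def, hu_def, norm_sub_rev]
  have hdc : dist A C = c := by rw [dist_eq_norm, hc_def, hv_def, norm_sub_rev]
  have hdt : dist A A' = t := by rw [dist_eq_norm, ht_def, hw_def, norm_sub_rev]
  rw [hdb, hdc, hdt]
  clear_value b c t m
  clear hiuw hivw hwv hw hu hv hb_def hc_def ht_def hm_def hdb hdc hdt hcos hcomb
  clear_value u v w
  clear hu_def hv_def hw_def u v w
  -- pure algebra from here on
  have key : (b * c - m) * (s1 * b - s2 * c) = 0 := by linear_combination hcos2
  have hbal : s1 * b = s2 * c := by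
    rcases mul_eq_zero.1 key with h1 | h1
    · exact absurd (by linarith : m = b * c) hm_ne
    · linarith
  have hs1c : s1 * (b + c) = c := by linear_combination hbal + c * hsum
  have hs2b : s2 * (b + c) = b := by linear_combination b * hsum - hbal
  have hbc : (0:ℝ) < b + c := by linarith
  have e1 : (b + c) ^ 2 * t ^ 2 = 2 * b ^ 2 * c ^ 2 + 2 * b * c * m := by
    linear_combination (b + c) ^ 2 * hw2 + (b ^ 2 * (s1 * (b + c) + c) + 2 * m * b) * hs1c +
      (c ^ 2 * (s2 * (b + c) + b) + 2 * m * s1 * (b + c)) * hs2b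
  have hle : t ^ 2 ≤ b * c := by
    have h2 : (b + c) ^ 2 * t ^ 2 ≤ (b + c) ^ 2 * (b * c) := by
      rw [e1]
      nlinarith [mul_pos hb hc, sq_nonneg (b - c), hm_le]
    exact le_of_mul_le_mul_left h2 (by positivity)
  have hts : t ≤ Real.sqrt b * Real.sqrt c := by
    rw [← Real.sqrt_mul hb.le c, ← Real.sqrt_sq htpos.le]
    exact Real.sqrt_le_sqrt hle
  rw [Real.sqrt_div' c hb.le, Real.sqrt_div' b hc.le, ge_iff_le]
  set sb := Real.sqrt b with hsb_def
  set sc := Real.sqrt c with hsc_def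
  have hsb : 0 < sb := Real.sqrt_pos.2 hb
  have hsc : 0 < sc := Real.sqrt_pos.2 hc
  have hsb2 : sb ^ 2 = b := Real.sq_sqrt hb.le
  have hsc2 : sc ^ 2 = c := Real.sq_sqrt hc.le
  rw [div_add_div _ _ hsb.ne' hsc.ne', div_mul_eq_mul_div, div_le_iff₀ (by positivity)]
  nlinarith [hts, htpos.le, mul_pos hsb hsc, hsb2, hsc2]
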